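/- Let p : Fin q → ℝ be a probability distribution with at least two distinct values among {p_j}, let γ = ∑_j p_j², λ > 0, R ≥ 0, and define g(s) = ∑_{j=1}^q p_j e^{−s (p_j − √(R(γ + 1/λ)) − 1/λ)} for s ∈ ℝ. Then g is convex, g(0) = 1, and g'(0) < 0 if and only if R < (γ − 1/λ)²/(γ + 1/λ) (assuming γ > 1/λ). Consequently, if R < (γ − 1/λ)²/(γ + 1/λ), then there exists s > 0 with g(s) < 1, i.e., the error exponent E_𝒜 = −ln(inf_{s>0} g(s)) is strictly positive. -/

import Mathlib

theorem stmt_12 (q : ℕ) (p : Fin q → ℝ) (hp : ∀ j, 0 ≤ p j)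
    (hsum : ∑ j, p j = 1) (hdist : ∃ i j, p i ≠ p j)
    (γ lam R : ℝ) (hγ : γ = ∑ j, (p j) ^ 2) (hlam : 0 < lam)
    (hγlam : 1 / lam < γ) (hR : 0 ≤ R)
    (g : ℝ → ℝ)
    (hg : g = fun s => ∑ j, p j *
      Real.exp (-s * (p j - Real.sqrt (R * (γ + 1 / lam)) - 1 / lam))) :
    ConvexOn ℝ Set.univ g ∧ g 0 = 1 ∧
      (deriv g 0 < 0 ↔ R < (γ - 1 / lam) ^ 2 / (γ + 1 / lam)) ∧
      (R < (γ - 1 / lam) ^ 2 / (γ + 1 / lam) → ∃ s > 0, g s < 1) := by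
  have hlami : 0 < 1 / lam := by positivity
  have hγpos : 0 < γ := lt_trans hlami hγlam
  have hden : 0 < γ + 1 / lam := by linarith
  set c : ℝ := Real.sqrt (R * (γ + 1 / lam)) + 1 / lam with hc
  -- rewrite g
  have hg' : g = fun s => ∑ j, p j * Real.exp (-(p j - c) * s) := by
    rw [hg]; funext s; congr 1; funext j; rw [hc]; ring_nf
  -- convexity
  have hconv : ConvexOn ℝ Set.univ g := by
    rw [hg']
    have : ConvexOn ℝ Set.univ (∑ j : Fin q,
        fun s : ℝ => p j * Real.exp (-(p j - c) * s)) := by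
      apply Finset.sum_induction _ (ConvexOn ℝ Set.univ)
      · intro f g hf hg; exact hf.add hg
      · exact convexOn_const 0 convex_univ
      · intro j _
        have h1 : ConvexOn ℝ Set.univ (fun s : ℝ => Real.exp (-(p j - c) * s)) := by
          have := convexOn_exp.comp_affineMap
            ((LinearMap.toAffineMap ((-(p j - c)) • LinearMap.id : ℝ →ₗ[ℝ] ℝ)))
          simpa [Function.comp_def, Pi.smul_apply, smul_eq_mul] using this
        simpa [smul_eq_mul] using h1.smul (hp j)
    convert this using 1
    funext s; simp
  -- derivative
  have hD : ∀ s : ℝ, HasDerivAt g (∑ j, p j * ((-(p j - c)) * Real.exp (-(p j - c) * s))) s := by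
    intro s
    rw [hg']
    apply HasDerivAt.fun_sum
    intro j _
    have h1 : HasDerivAt (fun s : ℝ => -(p j - c) * s) (-(p j - c)) s := by
      simpa using (hasDerivAt_id s).const_mul (-(p j - c))
    exact (h1.exp.const_mul (p j)).congr_deriv (by ring)
  have hderiv0 : deriv g 0 = c - γ := by
    have := (hD 0).deriv
    rw [this]
    simp only [mul_zero, Real.exp_zero, mul_one]
    have : ∑ j, p j * -(p j - c) = -∑ j, (p j)^2 + c * ∑ j, p j := by
      rw [← Finset.sum_neg_distrib, Finset.mul_sum, ← Finset.sum_add_distrib]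
      congr 1; funext j; ring
    rw [this, hsum, ← hγ]; ring
  have hiff : deriv g 0 < 0 ↔ R < (γ - 1 / lam) ^ 2 / (γ + 1 / lam) := by
    rw [hderiv0, hc]
    constructor
    · intro h
      have hs : Real.sqrt (R * (γ + 1 / lam)) < γ - 1 / lam := by linarith
      have := (Real.sqrt_lt' (by linarith : (0:ℝ) < γ - 1/lam)).1 hs
      rw [lt_div_iff₀ hden]; linarith
    · intro h
      have h2 : R * (γ + 1 / lam) < (γ - 1 / lam) ^ 2 := by
        rw [lt_div_iff₀ hden] at h; linarith
      have hs := (Real.sqrt_lt' (by linarith : (0:ℝ) < γ - 1/lam)).2 h2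
      linarith
  have hg0 : g 0 = 1 := by
    rw [hg]; simp [hsum]
  refine ⟨hconv, hg0, hiff, ?_⟩
  intro hRlt
  have hD0 : deriv g 0 < 0 := hiff.2 hRlt
  have hder : HasDerivAt g (deriv g 0) 0 := by
    rw [hderiv0]
    have := hD 0
    convert this using 1
    rw [← (hD 0).deriv, hderiv0]
  have hslope := hasDerivAt_iff_tendsto_slope.1 hder
  have hmono : nhdsWithin (0:ℝ) (Set.Ioi 0) ≤ nhdsWithin (0:ℝ) {(0:ℝ)}ᶜ :=
    nhdsWithin_mono 0 (fun x hx => ne_of_gt hx)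
  have hev : ∀ᶠ s in nhdsWithin (0:ℝ) (Set.Ioi 0), slope g 0 s < 0 :=
    (hslope.eventually (gt_mem_nhds hD0)).filter_mono hmono
  obtain ⟨s, hslt, hs⟩ := (hev.and eventually_mem_nhdsWithin).exists
  have hs0 : (0:ℝ) < s := hs
  rw [slope_def_field] at hslt
  have : g s - g 0 < 0 := by
    have h2 : (g s - g 0) / (s - 0) < 0 := hslt
    rw [sub_zero] at h2
    rcases div_neg_iff.mp h2 with ⟨_, h⟩ | ⟨h, _⟩
    · linarith
    · exact h
  exact ⟨s, hs0, by linarith⟩
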